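/- Let n ≥ 6 and suppose f is a total dominator coloring of the Kneser graph KG(n,2) with exactly n − 1 nonempty color classes. If t denotes the number of triangular color classes of f, then 1 ≤ t ≤ 5. -/

import Mathlib

/-- The vertex type of the Kneser graph `KG(n,2)`: 2-element subsets of `{0,…,n-1}`. -/
abbrev KVert (n : ℕ) := {s : Finset (Fin n) // s.card = 2}

/-- The Kneser graph `KG(n,2)`: vertices are 2-subsets, adjacent iff disjoint. -/
def KG2 (n : ℕ) : SimpleGraph (KVert n) where
  Adj u v := Disjoint u.1 v.1
  symm := ⟨fun u v h => h.symm⟩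
  loopless := ⟨fun u h => by
    have h2 := u.2
    have h' : Disjoint u.1 u.1 := h
    rw [disjoint_self] at h'
    simp [h'] at h2⟩

/-- A proper coloring of `G` with `k` (nonempty) color classes: a partition of the
vertex set into `k` nonempty independent sets. -/
def IsProperColoring {V : Type*} (G : SimpleGraph V) {k : ℕ} (C : Fin k → Set V) : Prop :=
  (∀ v, ∃! i, v ∈ C i) ∧ (∀ i, (C i).Nonempty) ∧
    ∀ i, ∀ u ∈ C i, ∀ w ∈ C i, ¬ G.Adj u w

/-- A total dominator coloring: a proper coloring such that every vertex is adjacent to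
all vertices of some (nonempty) color class. -/
def IsTDColoring {V : Type*} (G : SimpleGraph V) {k : ℕ} (C : Fin k → Set V) : Prop :=
  IsProperColoring G C ∧ ∀ v, ∃ i, (C i).Nonempty ∧ ∀ u ∈ C i, G.Adj v u

/-- The chromatic number: minimum number of color classes in a proper coloring. -/
noncomputable def chromNum {V : Type*} (G : SimpleGraph V) : ℕ :=
  sInf {k | ∃ C : Fin k → Set V, IsProperColoring G C}

/-- The total dominator chromatic number: minimum number of color classes in a TDC. -/
noncomputable def tdChromNum {V : Type*} (G : SimpleGraph V) : ℕ :=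
  sInf {k | ∃ C : Fin k → Set V, IsTDColoring G C}

/-- A total dominating set: every vertex has a neighbor in `S`. -/
def IsTotalDomSet {V : Type*} (G : SimpleGraph V) (S : Set V) : Prop :=
  ∀ v, ∃ u ∈ S, G.Adj v u

/-- The total domination number: minimum size of a total dominating set. -/
noncomputable def totalDomNum {V : Type*} [Fintype V] (G : SimpleGraph V) : ℕ :=
  sInf {k | ∃ S : Finset V, IsTotalDomSet G ↑S ∧ S.card = k}

/-- A set of vertices of `KG(n,2)` is starlike if all its 2-subsets share a common symbol. -/
def Starlike {n : ℕ} (A : Set (KVert n)) : Prop :=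
  ∃ a : Fin n, ∀ v ∈ A, a ∈ v.1

/-- A set of vertices of `KG(n,2)` is triangular if it equals `{{a,b},{a,c},{b,c}}`
for three distinct symbols `a, b, c`. -/
def Triangular {n : ℕ} (A : Set (KVert n)) : Prop :=
  ∃ a b c : Fin n, a ≠ b ∧ a ≠ c ∧ b ≠ c ∧
    A = {v : KVert n | v.1 = {a, b} ∨ v.1 = {a, c} ∨ v.1 = {b, c}}

lemma pair_of_mem {α : Type*} [DecidableEq α] {s : Finset α} (h2 : s.card = 2) {a : α}
    (ha : a ∈ s) : ∃ b, b ≠ a ∧ s = {a, b} := by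
  obtain ⟨x, y, hxy, rfl⟩ := Finset.card_eq_two.mp h2
  simp only [Finset.mem_insert, Finset.mem_singleton] at ha
  rcases ha with rfl | rfl
  · exact ⟨y, hxy.symm, rfl⟩
  · exact ⟨x, hxy, by rw [Finset.pair_comm]⟩

lemma star_or_tri {n : ℕ} (A : Set (KVert n)) (hne : A.Nonempty)
    (hind : ∀ u ∈ A, ∀ w ∈ A, ¬ (KG2 n).Adj u w) :
    Starlike A ∨ Triangular A := by
  by_cases hs : Starlike A
  · exact Or.inl hs
  right
  have hmeet : ∀ u ∈ A, ∀ w ∈ A, ∃ x, x ∈ u.1 ∧ x ∈ w.1 := by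
    intro u hu w hw
    have := hind u hu w hw
    have h' : ¬ Disjoint u.1 w.1 := this
    exact Finset.not_disjoint_iff.mp h'
  unfold Starlike at hs
  push_neg at hs
  obtain ⟨s1, hs1⟩ := hne
  obtain ⟨a, b, hab, hs1v⟩ := Finset.card_eq_two.mp s1.2
  obtain ⟨s2, hs2A, hs2a⟩ := hs a
  obtain ⟨x, hx1, hx2⟩ := hmeet s1 hs1 s2 hs2A
  have hxb : x = b := by
    rw [hs1v] at hx1
    simp only [Finset.mem_insert, Finset.mem_singleton] at hx1
    rcases hx1 with rfl | rfl
    · exact absurd hx2 hs2a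
    · rfl
  rw [hxb] at hx2
  obtain ⟨c, hcb, hs2v⟩ := pair_of_mem s2.2 hx2
  have hca : c ≠ a := by
    intro h; subst h
    exact hs2a (by rw [hs2v]; simp)
  obtain ⟨s3, hs3A, hs3b⟩ := hs b
  obtain ⟨y, hy1, hy3⟩ := hmeet s1 hs1 s3 hs3A
  have hya : y = a := by
    rw [hs1v] at hy1
    simp only [Finset.mem_insert, Finset.mem_singleton] at hy1
    rcases hy1 with rfl | rfl
    · rfl
    · exact absurd hy3 hs3b
  rw [hya] at hy3
  obtain ⟨w, hw2, hw3⟩ := hmeet s2 hs2A s3 hs3A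
  have hwc : w = c := by
    rw [hs2v] at hw2
    simp only [Finset.mem_insert, Finset.mem_singleton] at hw2
    rcases hw2 with rfl | rfl
    · exact absurd hw3 hs3b
    · rfl
  rw [hwc] at hw3
  obtain ⟨d, hda, hs3v⟩ := pair_of_mem s3.2 hy3
  have hdc : d = c := by
    have : c ∈ s3.1 := hw3
    rw [hs3v] at this
    simp only [Finset.mem_insert, Finset.mem_singleton] at this
    rcases this with h | h
    · exact absurd h hca
    · exact h.symm
  rw [hdc] at hs3v
  refine ⟨a, b, c, hab, Ne.symm hca, Ne.symm hcb, ?_⟩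
  have hS1 : s1.1 = {a, b} := hs1v
  have hS2 : s2.1 = {b, c} := hs2v
  have hS3 : s3.1 = {a, c} := hs3v
  ext v
  simp only [Set.mem_setOf_eq]
  constructor
  · intro hv
    by_cases hav : a ∈ v.1
    · obtain ⟨e, hea, hv1⟩ := pair_of_mem v.2 hav
      obtain ⟨u, hu1, hu2⟩ := hmeet v hv s2 hs2A
      rw [hv1] at hu1
      rw [hS2] at hu2
      have hu1' : u = a ∨ u = e := by simpa using hu1
      have hu2' : u = b ∨ u = c := by simpa using hu2
      rcases hu1' with h1 | h1
      · rcases hu2' with h2 | h2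
        · exact absurd (h1.symm.trans h2) hab
        · exact absurd (h1.symm.trans h2) (Ne.symm hca)
      · rcases hu2' with h2 | h2
        · left; rw [hv1, h1.symm.trans h2]
        · right; left; rw [hv1, h1.symm.trans h2]
    · obtain ⟨u, hu1, hu2⟩ := hmeet v hv s1 hs1
      rw [hS1] at hu2
      have hu2' : u = a ∨ u = b := by simpa using hu2
      rcases hu2' with h2 | h2
      · exact absurd (h2 ▸ hu1) hav
      · obtain ⟨p, hp1, hp2⟩ := hmeet v hv s3 hs3A
        rw [hS3] at hp2
        have hp2' : p = a ∨ p = c := by simpa using hp2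
        rcases hp2' with h3 | h3
        · exact absurd (h3 ▸ hp1) hav
        · right; right
          have hb : b ∈ v.1 := h2 ▸ hu1
          have hc' : c ∈ v.1 := h3 ▸ hp1
          have hsub : ({b, c} : Finset (Fin n)) ⊆ v.1 := by
            intro q hq
            have hq' : q = b ∨ q = c := by simpa using hq
            rcases hq' with h | h
            · exact h ▸ hb
            · exact h ▸ hc'
          have hcard : ({b, c} : Finset (Fin n)).card = 2 := Finset.card_pair (Ne.symm hcb)
          exact (Finset.eq_of_subset_of_card_le hsub (by rw [hcard, v.2])).symm
  · intro hv
    rcases hv with h | h | h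
    · have : v = s1 := Subtype.ext (by rw [h, hS1])
      rw [this]; exact hs1
    · have : v = s3 := Subtype.ext (by rw [h, hS3])
      rw [this]; exact hs3A
    · have : v = s2 := Subtype.ext (by rw [h, hS2])
      rw [this]; exact hs2A

example : True := trivial

lemma tri_card {n : ℕ} {A : Set (KVert n)} (h : Triangular A) :
    (Set.toFinite A).toFinset.card = 3 := by
  classical
  obtain ⟨a, b, c, hab, hac, hbc, hA⟩ := h
  set vab : KVert n := ⟨{a, b}, Finset.card_pair hab⟩ with hvab
  set vac : KVert n := ⟨{a, c}, Finset.card_pair hac⟩ with hvac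
  set vbc : KVert n := ⟨{b, c}, Finset.card_pair hbc⟩ with hvbc
  have heq : (Set.toFinite A).toFinset = {vab, vac, vbc} := by
    ext v
    simp only [Set.Finite.mem_toFinset, hA, Set.mem_setOf_eq, Finset.mem_insert,
      Finset.mem_singleton, Subtype.ext_iff, hvab, hvac, hvbc]
  rw [heq]
  have h1 : ({a, b} : Finset (Fin n)) ≠ {a, c} := by
    intro he
    have : b ∈ ({a, c} : Finset (Fin n)) := he ▸ (by simp)
    simp only [Finset.mem_insert, Finset.mem_singleton] at this
    rcases this with h | h
    · exact hab h.symm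
    · exact hbc h
  have h2 : ({a, b} : Finset (Fin n)) ≠ {b, c} := by
    intro he
    have : a ∈ ({b, c} : Finset (Fin n)) := he ▸ (by simp)
    simp only [Finset.mem_insert, Finset.mem_singleton] at this
    rcases this with h | h
    · exact hab h
    · exact hac h
  have h3 : ({a, c} : Finset (Fin n)) ≠ {b, c} := by
    intro he
    have : a ∈ ({b, c} : Finset (Fin n)) := he ▸ (by simp)
    simp only [Finset.mem_insert, Finset.mem_singleton] at this
    rcases this with h | h
    · exact hab h
    · exact hac h
  rw [Finset.card_insert_of_notMem, Finset.card_insert_of_notMem, Finset.card_singleton]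
  · simp only [Finset.mem_singleton, Subtype.ext_iff]
    exact h3
  · simp only [Finset.mem_insert, Finset.mem_singleton, Subtype.ext_iff]
    push_neg
    exact ⟨h1, h2⟩

/-- Let `n ≥ 6` and let `C` be a total dominator coloring of
`KG(n,2)` with exactly `n - 1` nonempty color classes. If `t` is the number of
triangular color classes of `C`, then `1 ≤ t ≤ 5`. -/
theorem stmt11 (n : ℕ) (hn : 6 ≤ n)
    (C : Fin (n - 1) → Set (KVert n)) (hC : IsTDColoring (KG2 n) C)
    (t : ℕ) (ht : t = {i : Fin (n - 1) | Triangular (C i)}.ncard) :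
    1 ≤ t ∧ t ≤ 5 := by
  classical
  obtain ⟨⟨hmem, hne, hind⟩, htd⟩ := hC
  have hSorT : ∀ i, Starlike (C i) ∨ Triangular (C i) := fun i =>
    star_or_tri _ (hne i) (hind i)
  set T : Finset (Fin (n - 1)) := Finset.univ.filter (fun i => Triangular (C i)) with hT
  have htT : t = T.card := by
    have hset : {i : Fin (n - 1) | Triangular (C i)} = ↑T := by
      ext i; simp [hT]
    rw [ht, hset, Set.ncard_coe_finset]
  constructor
  · -- 1 ≤ t
    rw [htT]
    by_contra hle
    have hTe : T = ∅ := by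
      rcases Finset.eq_empty_or_nonempty T with h | h
      · exact h
      · exact absurd h.card_pos (by omega)
    have hallstar : ∀ i, Starlike (C i) := by
      intro i
      rcases hSorT i with h | h
      · exact h
      · exfalso
        have hiT : i ∈ T := by rw [hT]; exact Finset.mem_filter.mpr ⟨Finset.mem_univ i, h⟩
        rw [hTe] at hiT
        exact absurd hiT (Finset.notMem_empty i)
    choose c hc using hallstar
    have hinj : Function.Injective c := by
      by_contra hni
      have hlt : (Finset.univ.image c).card < (Finset.univ : Finset (Fin (n - 1))).card := by
        rcases lt_or_eq_of_le (Finset.card_image_le (s := (Finset.univ : Finset (Fin (n - 1)))) (f := c)) with h | h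
        · exact h
        · exact absurd (fun x y hxy =>
            Finset.injOn_of_card_image_eq h (Finset.mem_coe.mpr (Finset.mem_univ x))
              (Finset.mem_coe.mpr (Finset.mem_univ y)) hxy) hni
      have hcu : (Finset.univ : Finset (Fin (n - 1))).card = n - 1 := by
        simp
      have hcompl2 : 2 ≤ ((Finset.univ.image c)ᶜ : Finset (Fin n)).card := by
        rw [Finset.card_compl, Fintype.card_fin]
        omega
      obtain ⟨x, hx, y, hy, hxy⟩ := Finset.one_lt_card.mp (show 1 < ((Finset.univ.image c)ᶜ : Finset (Fin n)).card by omega)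
      have hxy' : x ≠ y := hxy
      obtain ⟨i, hvi, -⟩ := hmem ⟨{x, y}, Finset.card_pair hxy'⟩
      have hci := hc i _ hvi
      have hci' : c i = x ∨ c i = y := by simpa using hci
      have hcim : c i ∈ Finset.univ.image c := Finset.mem_image_of_mem c (Finset.mem_univ i)
      rcases hci' with h | h
      · rw [h] at hcim; exact (Finset.mem_compl.mp hx) hcim
      · rw [h] at hcim; exact (Finset.mem_compl.mp hy) hcim
    have hcard : (Finset.univ.image c).card = n - 1 := by
      rw [Finset.card_image_of_injective _ hinj]
      simp
    have hcompl : ((Finset.univ.image c)ᶜ : Finset (Fin n)).card = 1 := by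
      rw [Finset.card_compl, Fintype.card_fin, hcard]
      omega
    obtain ⟨z, hz⟩ := Finset.card_eq_one.mp hcompl
    have hznotim : z ∉ Finset.univ.image c := by
      have : z ∈ ((Finset.univ.image c)ᶜ : Finset (Fin n)) := by
        rw [hz]; exact Finset.mem_singleton_self z
      exact Finset.mem_compl.mp this
    have hciz : ∀ i, c i ≠ z := fun i h =>
      hznotim (h ▸ Finset.mem_image_of_mem c (Finset.mem_univ i))
    have hkey : ∀ i, (⟨{c i, z}, Finset.card_pair (hciz i)⟩ : KVert n) ∈ C i := by
      intro i
      obtain ⟨j, hj, -⟩ := hmem ⟨{c i, z}, Finset.card_pair (hciz i)⟩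
      have hcj := hc j _ hj
      have hcj' : c j = c i ∨ c j = z := by simpa using hcj
      rcases hcj' with h | h
      · have : j = i := hinj h
        rw [this] at hj; exact hj
      · exact absurd h (hciz j)
    have hi0 : 0 < n - 1 := by omega
    set i0 : Fin (n - 1) := ⟨0, hi0⟩
    have hwz : z ≠ c i0 := Ne.symm (hciz i0)
    obtain ⟨j, hjne, hjadj⟩ := htd ⟨{z, c i0}, Finset.card_pair hwz⟩
    have hadj := hjadj _ (hkey j)
    have hdisj : Disjoint ({z, c i0} : Finset (Fin n)) ({c j, z} : Finset (Fin n)) := hadj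
    rw [Finset.disjoint_left] at hdisj
    exact hdisj (Finset.mem_insert_self z _)
      (Finset.mem_insert_of_mem (Finset.mem_singleton_self z))
  · -- t ≤ 5
    by_contra h6
    push_neg at h6
    have hstar : ∀ i, ∃ a : Fin n, i ∉ T → ∀ v ∈ C i, a ∈ v.1 := by
      intro i
      by_cases hi : i ∈ T
      · exact ⟨⟨0, by omega⟩, fun h => absurd hi h⟩
      · rcases hSorT i with ⟨a, ha⟩ | htri
        · exact ⟨a, fun _ => ha⟩
        · exact absurd (Finset.mem_filter.mpr ⟨Finset.mem_univ i, htri⟩) hi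
    choose c hc using hstar
    set D : Finset (Fin n) := Tᶜ.image c with hD
    have hDcard : D.card ≤ (n - 1) - t := by
      calc D.card ≤ Tᶜ.card := Finset.card_image_le
        _ = (n - 1) - t := by
            rw [Finset.card_compl, htT]
            congr 1
            simp
    have htle : t ≤ n - 1 := by
      rw [htT]
      calc T.card ≤ Finset.univ.card := Finset.card_le_univ T
        _ = n - 1 := by simp
    set Z : Finset (Fin n) := Dᶜ with hZdef
    have hZ : t + 1 ≤ Z.card := by
      rw [hZdef, Finset.card_compl, Fintype.card_fin]
      omega
    set A : Finset (KVert n) := Finset.univ.filter (fun v => v.1 ⊆ Z) with hA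
    have hAcard : A.card = Z.card.choose 2 := by
      rw [← Finset.card_powersetCard 2 Z]
      apply Finset.card_bij (fun (v : KVert n) _ => v.1)
      · intro v hv
        rw [Finset.mem_powersetCard]
        exact ⟨(Finset.mem_filter.mp hv).2, v.2⟩
      · intro u hu v hv huv
        exact Subtype.ext huv
      · intro s hs
        rw [Finset.mem_powersetCard] at hs
        exact ⟨⟨s, hs.2⟩, Finset.mem_filter.mpr ⟨Finset.mem_univ _, hs.1⟩, rfl⟩
    have hsub : A ⊆ T.biUnion (fun i => (Set.toFinite (C i)).toFinset) := by
      intro v hv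
      obtain ⟨i, hvi, -⟩ := hmem v
      have hiT : i ∈ T := by
        by_contra hiT
        have hciv := hc i hiT v hvi
        have hvZ : v.1 ⊆ Z := (Finset.mem_filter.mp hv).2
        have h1 : c i ∈ Z := hvZ hciv
        have h2 : c i ∈ D := Finset.mem_image_of_mem c (Finset.mem_compl.mpr hiT)
        rw [hZdef] at h1
        exact (Finset.mem_compl.mp h1) h2
      exact Finset.mem_biUnion.mpr ⟨i, hiT, (Set.Finite.mem_toFinset _).mpr hvi⟩
    have hcount : A.card ≤ 3 * t := by
      calc A.card ≤ (T.biUnion (fun i => (Set.toFinite (C i)).toFinset)).card :=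
            Finset.card_le_card hsub
        _ ≤ ∑ i ∈ T, ((Set.toFinite (C i)).toFinset).card := Finset.card_biUnion_le
        _ = ∑ i ∈ T, 3 := Finset.sum_congr rfl (fun i hi =>
            tri_card (Finset.mem_filter.mp hi).2)
        _ = 3 * t := by rw [Finset.sum_const, htT, smul_eq_mul, mul_comm]
    have hchoose : (t + 1).choose 2 ≤ Z.card.choose 2 := Nat.choose_le_choose 2 hZ
    have h21 : (t + 1).choose 2 ≤ 3 * t := by
      rw [← hAcard] at hchoose
      exact hchoose.trans hcount
    have he : (t + 1).choose 2 = (t + 1) * t / 2 := by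
      rw [Nat.choose_two_right]
      simp
    obtain ⟨k, hk⟩ := Nat.even_mul_succ_self t
    have hk2 : (t + 1) * t = 2 * k := by rw [mul_comm]; omega
    have hdiv : (t + 1) * t / 2 = k := by rw [hk2]; omega
    rw [he, hdiv] at h21
    have h7 : 7 * t ≤ (t + 1) * t := Nat.mul_le_mul_right t (by omega)
    have : (t + 1) * t ≤ 6 * t := by omega
    have := h7.trans this
    omega
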